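/- Let A = (a_ijk) ∈ S₃,₃ with positive diagonal entries and a₁₂₃ ≥ 0. Suppose a₁₂₂ ≥ (a₁₁₁a₂₂₂²)^(1/3), a₁₃₃ ≥ (a₁₁₁a₃₃₃²)^(1/3), a₁₁₂ ≥ 0, a₁₁₃ ≥ -(a₁₁₁²a₃₃₃)^(1/3), a₂₂₃ ≥ 0, a₂₃₃ ≥ 0. Then A is strictly copositive. -/

import Mathlib

set_option maxHeartbeats 800000

lemma stmt_18_aux (u v : ℝ) (hu : 0 ≤ u) (hv : 0 ≤ v) :
    4 * (u^3 + v^3 - 3*u^2*v + 3*u*v^2) ≥ u^3 + v^3 := by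
  nlinarith [mul_nonneg hu (sq_nonneg (u - 2*v)), pow_nonneg hv 3]

theorem stmt_18 (a₁₁₁ a₂₂₂ a₃₃₃ a₁₁₂ a₁₂₂ a₁₁₃ a₁₃₃ a₂₂₃ a₂₃₃ a₁₂₃ : ℝ)
    (h1 : 0 < a₁₁₁) (h2 : 0 < a₂₂₂) (h3 : 0 < a₃₃₃)
    (h123 : a₁₂₃ ≥ 0)
    (c1 : a₁₂₂ ≥ (a₁₁₁ * a₂₂₂^2) ^ ((1:ℝ)/3))
    (c2 : a₁₃₃ ≥ (a₁₁₁ * a₃₃₃^2) ^ ((1:ℝ)/3))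
    (c3 : a₁₁₂ ≥ 0)
    (c4 : a₁₁₃ ≥ -((a₁₁₁^2 * a₃₃₃) ^ ((1:ℝ)/3)))
    (c5 : a₂₂₃ ≥ 0) (c6 : a₂₃₃ ≥ 0) :
    ∀ x₁ x₂ x₃ : ℝ, 0 ≤ x₁ → 0 ≤ x₂ → 0 ≤ x₃ → (x₁, x₂, x₃) ≠ (0, 0, 0) →
      0 < a₁₁₁*x₁^3 + a₂₂₂*x₂^3 + a₃₃₃*x₃^3 + 3*a₁₁₂*x₁^2*x₂ + 3*a₁₂₂*x₁*x₂^2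
          + 3*a₁₁₃*x₁^2*x₃ + 3*a₁₃₃*x₁*x₃^2 + 3*a₂₂₃*x₂^2*x₃ + 3*a₂₃₃*x₂*x₃^2
          + 6*a₁₂₃*x₁*x₂*x₃ := by
  intro x₁ x₂ x₃ hx1 hx2 hx3 hne
  set α := a₁₁₁ ^ ((1:ℝ)/3) with hαdef
  set β := a₂₂₂ ^ ((1:ℝ)/3) with hβdef
  set γ := a₃₃₃ ^ ((1:ℝ)/3) with hγdef
  have hα : 0 < α := Real.rpow_pos_of_pos h1 _
  have hβ : 0 < β := Real.rpow_pos_of_pos h2 _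
  have hγ : 0 < γ := Real.rpow_pos_of_pos h3 _
  have cube : ∀ a : ℝ, 0 < a → (a ^ ((1:ℝ)/3)) ^ 3 = a := by
    intro a ha
    rw [← Real.rpow_natCast (a ^ ((1:ℝ)/3)) 3, ← Real.rpow_mul ha.le]
    norm_num
  have hα3 : α ^ 3 = a₁₁₁ := cube _ h1
  have hβ3 : β ^ 3 = a₂₂₂ := cube _ h2
  have hγ3 : γ ^ 3 = a₃₃₃ := cube _ h3
  have hc1 : a₁₂₂ ≥ α * β ^ 2 := by
    have : (a₁₁₁ * a₂₂₂ ^ 2) ^ ((1:ℝ)/3) = α * β ^ 2 := by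
      rw [Real.mul_rpow h1.le (by positivity), ← Real.rpow_natCast a₂₂₂ 2,
        ← Real.rpow_mul h2.le, ← Real.rpow_natCast β 2, hβdef, ← Real.rpow_mul h2.le]
      norm_num
      exact Or.inl hαdef.symm
    rwa [this] at c1
  have hc2 : a₁₃₃ ≥ α * γ ^ 2 := by
    have : (a₁₁₁ * a₃₃₃ ^ 2) ^ ((1:ℝ)/3) = α * γ ^ 2 := by
      rw [Real.mul_rpow h1.le (by positivity), ← Real.rpow_natCast a₃₃₃ 2,
        ← Real.rpow_mul h3.le, ← Real.rpow_natCast γ 2, hγdef, ← Real.rpow_mul h3.le]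
      norm_num
      exact Or.inl hαdef.symm
    rwa [this] at c2
  have hc4 : a₁₁₃ ≥ -(α ^ 2 * γ) := by
    have : (a₁₁₁ ^ 2 * a₃₃₃) ^ ((1:ℝ)/3) = α ^ 2 * γ := by
      rw [Real.mul_rpow (by positivity) h3.le, ← Real.rpow_natCast a₁₁₁ 2,
        ← Real.rpow_mul h1.le, ← Real.rpow_natCast α 2, hαdef, ← Real.rpow_mul h1.le]
      norm_num
      exact Or.inl hγdef.symm
    rwa [this] at c4
  -- positivity of the diagonal reference sum
  have hpos : 0 < α ^ 3 * x₁ ^ 3 + β ^ 3 * x₂ ^ 3 + γ ^ 3 * x₃ ^ 3 := by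
    have t1 : 0 ≤ α ^ 3 * x₁ ^ 3 := mul_nonneg (pow_pos hα 3).le (pow_nonneg hx1 3)
    have t2 : 0 ≤ β ^ 3 * x₂ ^ 3 := mul_nonneg (pow_pos hβ 3).le (pow_nonneg hx2 3)
    have t3 : 0 ≤ γ ^ 3 * x₃ ^ 3 := mul_nonneg (pow_pos hγ 3).le (pow_nonneg hx3 3)
    rcases hx1.lt_or_eq with h | h
    · have := mul_pos (pow_pos hα 3) (pow_pos h 3); linarith
    · rcases hx2.lt_or_eq with h2' | h2'
      · have := mul_pos (pow_pos hβ 3) (pow_pos h2' 3); linarith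
      · rcases hx3.lt_or_eq with h3' | h3'
        · have := mul_pos (pow_pos hγ 3) (pow_pos h3' 3); linarith
        · exact absurd (by rw [← h, ← h2', ← h3']) hne
  -- drop the nonnegative off-diagonal terms
  have d1 : 0 ≤ a₁₁₂ * (x₁^2 * x₂) := mul_nonneg c3 (mul_nonneg (sq_nonneg x₁) hx2)
  have d2 : 0 ≤ (a₁₂₂ - α * β ^ 2) * (x₁ * x₂^2) :=
    mul_nonneg (sub_nonneg.2 hc1) (mul_nonneg hx1 (sq_nonneg x₂))
  have d3 : 0 ≤ (a₁₁₃ + α ^ 2 * γ) * (x₁^2 * x₃) :=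
    mul_nonneg (by linarith) (mul_nonneg (sq_nonneg x₁) hx3)
  have d4 : 0 ≤ (a₁₃₃ - α * γ ^ 2) * (x₁ * x₃^2) :=
    mul_nonneg (sub_nonneg.2 hc2) (mul_nonneg hx1 (sq_nonneg x₃))
  have d5 : 0 ≤ a₂₂₃ * (x₂^2 * x₃) := mul_nonneg c5 (mul_nonneg (sq_nonneg x₂) hx3)
  have d6 : 0 ≤ a₂₃₃ * (x₂ * x₃^2) := mul_nonneg c6 (mul_nonneg hx2 (sq_nonneg x₃))
  have d7 : 0 ≤ a₁₂₃ * (x₁ * x₂ * x₃) :=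
    mul_nonneg h123 (mul_nonneg (mul_nonneg hx1 hx2) hx3)
  have d8 : 0 ≤ (α * β ^ 2) * (x₁ * x₂^2) :=
    mul_nonneg (mul_nonneg hα.le (sq_nonneg β)) (mul_nonneg hx1 (sq_nonneg x₂))
  -- key polynomial inequality with u = α*x₁, v = γ*x₃
  have key := stmt_18_aux (α * x₁) (γ * x₃) (mul_nonneg hα.le hx1) (mul_nonneg hγ.le hx3)
  have key' : 4 * (α^3*x₁^3 + γ^3*x₃^3 - 3*α^2*γ*x₁^2*x₃ + 3*α*γ^2*x₁*x₃^2)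
      ≥ α^3*x₁^3 + γ^3*x₃^3 := by nlinarith [key]
  have hβx : 0 ≤ β ^ 3 * x₂ ^ 3 := mul_nonneg (pow_pos hβ 3).le (pow_nonneg hx2 3)
  -- put everything together (linear in the above products)
  have main : a₁₁₁*x₁^3 + a₂₂₂*x₂^3 + a₃₃₃*x₃^3 + 3*a₁₁₂*x₁^2*x₂ + 3*a₁₂₂*x₁*x₂^2
          + 3*a₁₁₃*x₁^2*x₃ + 3*a₁₃₃*x₁*x₃^2 + 3*a₂₂₃*x₂^2*x₃ + 3*a₂₃₃*x₂*x₃^2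
          + 6*a₁₂₃*x₁*x₂*x₃
      ≥ α^3*x₁^3 + β^3*x₂^3 + γ^3*x₃^3 - 3*α^2*γ*x₁^2*x₃ + 3*α*γ^2*x₁*x₃^2 := by
    have e1 : a₁₁₁ = α ^ 3 := hα3.symm
    have e2 : a₂₂₂ = β ^ 3 := hβ3.symm
    have e3 : a₃₃₃ = γ ^ 3 := hγ3.symm
    rw [e1, e2, e3]
    linarith [d1, d2, d3, d4, d5, d6, d7, d8]
  linarith [main, key', hβx, hpos]
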